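/- Let X be a Banach space, (x_n*) a sequence in X* with ‖∑ α_n x_n*‖ ≤ sup|α_n| for all (α_n) ∈ c₀, and (x_m) a bounded sequence in X with c̃_J(x_m) = c̃. Suppose there exist κ > 0 and subsequences such that x_{n_m}*(x_{p_{n_m}}) > κ + c̃ and ∑_{j≠m} |x_{n_j}*(x_{p_{n_m}})| < κ/2 for all m. Then ‖∑_m α_m x_{p_{n_m}}‖ ≥ (κ/2 + c̃) ∑_m |α_m| for all (α_m) ∈ ℓ¹, hence c_J(x_{p_{n_m}}) ≥ κ/2 + c̃ > c̃, a contradiction; consequently no such κ and subsequences exist. -/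

import Mathlib

open Filter Topology

/-- `cm x m` is the infimum of `‖∑_{n≥m} α_n x_n‖` over ℓ¹-normalized
coefficient sequences supported on `{m, m+1, ...}`. -/
noncomputable def cm {X : Type*} [NormedAddCommGroup X] [NormedSpace ℝ X]
    (x : ℕ → X) (m : ℕ) : ℝ :=
  sInf {r : ℝ | ∃ α : ℕ → ℝ, (∀ n < m, α n = 0) ∧ Summable (fun n => |α n|) ∧
    (∑' n, |α n|) = 1 ∧ r = ‖∑' n, α n • x n‖}

/-- The James constant of a bounded sequence. -/
noncomputable def cJ {X : Type*} [NormedAddCommGroup X] [NormedSpace ℝ X]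
    (x : ℕ → X) : ℝ :=
  ⨆ m, cm x m

/-- The supremum of the James constants over all subsequences. -/
noncomputable def cJtilde {X : Type*} [NormedAddCommGroup X] [NormedSpace ℝ X]
    (x : ℕ → X) : ℝ :=
  ⨆ f : {f : ℕ → ℕ // StrictMono f}, cJ (x ∘ f.1)

open NormedSpace in
private theorem keyb {X : Type*} [NormedAddCommGroup X] [NormedSpace ℝ X]
    (xstar : ℕ → StrongDual ℝ X)
    (hupper : ∀ (s : Finset ℕ) (α : ℕ → ℝ),
      ‖∑ n ∈ s, α n • xstar n‖ ≤ ⨆ n ∈ s, |α n|)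
    (n : ℕ → ℕ) (hn : StrictMono n)
    (θ : ℕ → ℝ) (hθ : ∀ j, |θ j| ≤ 1) (s : Finset ℕ) :
    ‖∑ j ∈ s, θ j • xstar (n j)‖ ≤ 1 := by
  classical
  set γ : ℕ → ℝ := fun k => if h : ∃ j, n j = k then θ h.choose else 0 with hγ
  have hγle : ∀ k, |γ k| ≤ 1 := by
    intro k
    by_cases h : ∃ j, n j = k
    · simp only [hγ, dif_pos h]; exact hθ _
    · simp [hγ, dif_neg h]
  have hγn : ∀ j, γ (n j) = θ j := by
    intro j
    have h : ∃ j', n j' = n j := ⟨j, rfl⟩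
    have hs := h.choose_spec
    simp only [hγ, dif_pos h]
    exact congrArg θ (hn.injective hs)
  calc ‖∑ j ∈ s, θ j • xstar (n j)‖
      = ‖∑ k ∈ s.image n, γ k • xstar k‖ := by
        rw [Finset.sum_image (fun a _ b _ h => hn.injective h)]
        exact congrArg norm (Finset.sum_congr rfl fun j _ => by rw [hγn j])
    _ ≤ ⨆ k ∈ s.image n, |γ k| := hupper _ _
    _ ≤ 1 := Real.iSup_le (fun k => Real.iSup_le (fun _ => hγle k) zero_le_one) zero_le_one

open NormedSpace in
private theorem rowb {X : Type*} [NormedAddCommGroup X] [NormedSpace ℝ X]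
    (xstar : ℕ → StrongDual ℝ X)
    (hupper : ∀ (s : Finset ℕ) (α : ℕ → ℝ),
      ‖∑ n ∈ s, α n • xstar n‖ ≤ ⨆ n ∈ s, |α n|)
    (n : ℕ → ℕ) (hn : StrictMono n) (z : X) (s : Finset ℕ) :
    ∑ j ∈ s, |xstar (n j) z| ≤ ‖z‖ := by
  classical
  set θ : ℕ → ℝ := fun j => if 0 ≤ xstar (n j) z then 1 else -1 with hθdef
  have hθ : ∀ j, |θ j| ≤ 1 := by
    intro j; by_cases h : 0 ≤ xstar (n j) z <;> simp [hθdef, h]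
  have heq : ∑ j ∈ s, |xstar (n j) z| = (∑ j ∈ s, θ j • xstar (n j)) z := by
    rw [ContinuousLinearMap.sum_apply]
    refine Finset.sum_congr rfl fun j _ => ?_
    by_cases h : 0 ≤ xstar (n j) z
    · simp [hθdef, h, abs_of_nonneg h]
    · simp [hθdef, h, abs_of_neg (lt_of_not_ge h)]
  rw [heq]
  calc (∑ j ∈ s, θ j • xstar (n j)) z ≤ |(∑ j ∈ s, θ j • xstar (n j)) z| := le_abs_self _
    _ ≤ ‖∑ j ∈ s, θ j • xstar (n j)‖ * ‖z‖ := (∑ j ∈ s, θ j • xstar (n j)).le_opNorm z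
    _ ≤ 1 * ‖z‖ :=
        mul_le_mul_of_nonneg_right (keyb xstar hupper n hn θ hθ s) (norm_nonneg z)
    _ = ‖z‖ := one_mul _

open NormedSpace in
private theorem rowsum {X : Type*} [NormedAddCommGroup X] [NormedSpace ℝ X]
    (xstar : ℕ → StrongDual ℝ X)
    (hupper : ∀ (s : Finset ℕ) (α : ℕ → ℝ),
      ‖∑ n ∈ s, α n • xstar n‖ ≤ ⨆ n ∈ s, |α n|)
    (n : ℕ → ℕ) (hn : StrictMono n) (z : X) :
    Summable (fun j => |xstar (n j) z|) ∧ (∑' j, |xstar (n j) z|) ≤ ‖z‖ := by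
  have hsum : Summable (fun j => |xstar (n j) z|) :=
    summable_of_sum_le (fun j => abs_nonneg _) (rowb xstar hupper n hn z)
  exact ⟨hsum, Summable.tsum_le_of_sum_le hsum (rowb xstar hupper n hn z)⟩

open NormedSpace in
theorem stmt8 {X : Type*} [NormedAddCommGroup X] [NormedSpace ℝ X] [CompleteSpace X]
    (xstar : ℕ → StrongDual ℝ X)
    (hupper : ∀ (s : Finset ℕ) (α : ℕ → ℝ),
      ‖∑ n ∈ s, α n • xstar n‖ ≤ ⨆ n ∈ s, |α n|)
    (x : ℕ → X) (hbdd : ∃ C, ∀ n, ‖x n‖ ≤ C)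
    (κ : ℝ) (hκ : 0 < κ) (n p : ℕ → ℕ) (hn : StrictMono n) (hp : StrictMono p)
    (h1 : ∀ m, κ + cJtilde x < xstar (n m) (x (p (n m))))
    (h2 : ∀ m, (∑' j : {j : ℕ // j ≠ m}, |xstar (n j.1) (x (p (n m)))|) < κ / 2) :
    (∀ α : ℕ → ℝ, Summable (fun m => |α m|) →
      (κ / 2 + cJtilde x) * ∑' m, |α m| ≤ ‖∑' m, α m • x (p (n m))‖) ∧ False := by
  classical
  obtain ⟨C, hC⟩ := hbdd
  have hC0 : (0:ℝ) ≤ C := le_trans (norm_nonneg _) (hC 0)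
  set y : ℕ → X := fun m => x (p (n m)) with hy_def
  have hy : ∀ m, ‖y m‖ ≤ C := fun m => hC _
  set a : ℕ → ℕ → ℝ := fun j m => xstar (n j) (y m) with ha_def
  -- absolute column sums
  have hacol : ∀ m, Summable (fun j => |a j m|) :=
    fun m => (rowsum xstar hupper n hn (y m)).1
  have hacol_le : ∀ m, (∑' j, |a j m|) ≤ ‖y m‖ :=
    fun m => (rowsum xstar hupper n hn (y m)).2
  have ha_bd : ∀ j m, |a j m| ≤ C := by
    intro j m
    have : |a j m| ≤ ∑ i ∈ {j}, |a i m| := by simp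
    exact this.trans ((rowb xstar hupper n hn (y m) {j}).trans (hy m))
  -- PART 1
  have part1 : ∀ α : ℕ → ℝ, Summable (fun m => |α m|) →
      (κ / 2 + cJtilde x) * ∑' m, |α m| ≤ ‖∑' m, α m • y m‖ := by
    intro α hα
    have hsv : Summable (fun m => α m • y m) := by
      refine Summable.of_norm_bounded (hα.mul_right C) fun m => ?_
      rw [norm_smul, Real.norm_eq_abs]
      exact mul_le_mul_of_nonneg_left (hy m) (abs_nonneg _)
    set v : X := ∑' m, α m • y m with hv_def
    set θ : ℕ → ℝ := fun m => if α m < 0 then -1 else 1 with hθ_def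
    have hθ1 : ∀ m, |θ m| ≤ 1 := by
      intro m; by_cases h : α m < 0 <;> simp [hθ_def, h]
    have hθα : ∀ m, θ m * α m = |α m| := by
      intro m
      by_cases h : α m < 0
      · simp [hθ_def, h, abs_of_neg h]
      · simp [hθ_def, h, abs_of_nonneg (not_lt.mp h)]
    set F : ℕ × ℕ → ℝ := fun q => θ q.1 * (α q.2 * a q.1 q.2) with hF_def
    -- absolute summability over the product
    have hGrow : ∀ m, Summable (fun j => |α m| * |a j m|) :=
      fun m => (hacol m).mul_left _
    have hGrowsum : ∀ m, (∑' j, |α m| * |a j m|) ≤ |α m| * C := by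
      intro m
      rw [Summable.tsum_mul_left _ (hacol m)]
      exact mul_le_mul_of_nonneg_left ((hacol_le m).trans (hy m)) (abs_nonneg _)
    have hG : Summable (fun q : ℕ × ℕ => |α q.1| * |a q.2 q.1|) := by
      rw [summable_prod_of_nonneg (fun q => mul_nonneg (abs_nonneg _) (abs_nonneg _))]
      refine ⟨fun m => hGrow m, ?_⟩
      refine Summable.of_nonneg_of_le (fun m => tsum_nonneg fun j =>
        mul_nonneg (abs_nonneg _) (abs_nonneg _)) (fun m => hGrowsum m) (hα.mul_right C)
    have habs : Summable (fun q : ℕ × ℕ => |α q.2| * |a q.1 q.2|) := hG.prod_symm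
    have hFabs_le : ∀ q : ℕ × ℕ, ‖F q‖ ≤ |α q.2| * |a q.1 q.2| := by
      intro q
      rw [Real.norm_eq_abs, hF_def]
      calc |θ q.1 * (α q.2 * a q.1 q.2)| = |θ q.1| * (|α q.2| * |a q.1 q.2|) := by
            rw [abs_mul, abs_mul]
        _ ≤ 1 * (|α q.2| * |a q.1 q.2|) :=
            mul_le_mul_of_nonneg_right (hθ1 _) (mul_nonneg (abs_nonneg _) (abs_nonneg _))
        _ = |α q.2| * |a q.1 q.2| := one_mul _
    have hF : Summable F := Summable.of_norm_bounded habs hFabs_le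
    have hFrow : ∀ j, Summable (fun m => F (j, m)) := fun j => hF.prod_factor j
    have hFcol : ∀ m, Summable (fun j => F (j, m)) := fun m => hF.prod_symm.prod_factor m
    -- marginal over m of absolute values, summable in j
    have habs_marg : Summable (fun j => ∑' m, |α m| * |a j m|) := by
      have := (summable_prod_of_nonneg
        (f := fun q : ℕ × ℕ => |α q.2| * |a q.1 q.2|)
        (fun q => mul_nonneg (abs_nonneg _) (abs_nonneg _))).mp habs
      exact this.2
    -- rows summable for the α·a function
    have haa : ∀ j, Summable (fun m => α m * a j m) := by
      intro j
      refine Summable.of_norm_bounded ((hα.mul_right C)) fun m => ?_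
      rw [Real.norm_eq_abs, abs_mul]
      exact mul_le_mul_of_nonneg_left (ha_bd j m) (abs_nonneg _)
    have hxv : ∀ j, xstar (n j) v = ∑' m, α m * a j m := by
      intro j
      rw [hv_def, ContinuousLinearMap.map_tsum _ hsv]
      exact tsum_congr fun m => by rw [map_smul]; rfl
    have hTj : ∀ j, θ j * xstar (n j) v = ∑' m, F (j, m) := by
      intro j
      rw [hxv j, ← Summable.tsum_mul_left (θ j) (haa j)]
    have hTm_bound : ∀ j, ‖∑' m, F (j, m)‖ ≤ ∑' m, |α m| * |a j m| := by
      intro j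
      refine (norm_tsum_le_tsum_norm ?_).trans
        (Summable.tsum_le_tsum (fun m => hFabs_le (j, m)) ?_ (habs.prod_factor j))
      · exact Summable.of_nonneg_of_le (fun m => norm_nonneg _)
          (fun m => hFabs_le (j, m)) (habs.prod_factor j)
      · exact Summable.of_nonneg_of_le (fun m => norm_nonneg _)
          (fun m => hFabs_le (j, m)) (habs.prod_factor j)
    have hTsum : Summable (fun j => θ j * xstar (n j) v) := by
      refine Summable.of_norm_bounded habs_marg fun j => ?_
      rw [hTj j]; exact hTm_bound j
    set T : ℝ := ∑' j, θ j * xstar (n j) v with hT_def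
    -- Upper bound : T ≤ ‖v‖
    have hTle : T ≤ ‖v‖ := by
      refine le_of_tendsto hTsum.hasSum.tendsto_sum_nat (Eventually.of_forall fun N => ?_)
      have heq : ∑ j ∈ Finset.range N, θ j * xstar (n j) v
          = (∑ j ∈ Finset.range N, θ j • xstar (n j)) v := by
        rw [ContinuousLinearMap.sum_apply]; rfl
      rw [heq]
      calc (∑ j ∈ Finset.range N, θ j • xstar (n j)) v
          ≤ |(∑ j ∈ Finset.range N, θ j • xstar (n j)) v| := le_abs_self _
        _ ≤ ‖∑ j ∈ Finset.range N, θ j • xstar (n j)‖ * ‖v‖ := by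
            rw [← Real.norm_eq_abs]; exact ContinuousLinearMap.le_opNorm _ _
        _ ≤ 1 * ‖v‖ := mul_le_mul_of_nonneg_right
            (keyb xstar hupper n hn θ hθ1 _) (norm_nonneg _)
        _ = ‖v‖ := one_mul _
    -- Lower bound : (κ/2 + c̃) * S ≤ T
    have hswap : T = ∑' m, ∑' j, F (j, m) := by
      rw [hT_def]
      rw [tsum_congr hTj]
      exact (Summable.tsum_comm' (f := fun j m => F (j, m)) hF hFrow hFcol).symm
    have hinner : ∀ m, |α m| * (κ / 2 + cJtilde x) ≤ ∑' j, F (j, m) := by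
      intro m
      rw [Summable.tsum_eq_add_tsum_ite (hFcol m) m]
      have hFmm : |α m| * (κ + cJtilde x) ≤ F (m, m) := by
        have : F (m, m) = |α m| * a m m := by
          rw [hF_def]; dsimp only
          rw [← mul_assoc, hθα m]
        rw [this]
        exact mul_le_mul_of_nonneg_left (h1 m).le (abs_nonneg _)
      have hRsummable : Summable (fun j => if j = m then 0 else F (j, m)) := by
        refine Summable.of_norm_bounded ((hacol m).mul_left |α m|) fun j => ?_
        by_cases h : j = m
        · simp only [if_pos h, norm_zero]; positivity
        · simp only [if_neg h, Real.norm_eq_abs]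
          have := hFabs_le (j, m); rw [Real.norm_eq_abs] at this; exact this
      have hiteabs : Summable (fun j => if j = m then 0 else |a j m|) := by
        refine Summable.of_nonneg_of_le (fun j => by positivity) (fun j => ?_) (hacol m)
        by_cases h : j = m <;> simp [h]
      have hitesum : (∑' j, if j = m then 0 else |a j m|) ≤ κ / 2 := by
        have heq : (∑' j, if j = m then 0 else |a j m|)
            = ∑' (x : ↑{j : ℕ | j ≠ m}), |a ↑x m| := by
          rw [tsum_subtype {j : ℕ | j ≠ m} (fun j => |a j m|)]
          refine tsum_congr fun j => ?_
          by_cases h : j = m <;> simp [Set.indicator_apply, h]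
        rw [heq]
        exact (h2 m).le
      have hRle : |∑' j, if j = m then 0 else F (j, m)| ≤ |α m| * (κ / 2) := by
        have h1' : |∑' j, if j = m then 0 else F (j, m)|
            ≤ ∑' j, |α m| * (if j = m then 0 else |a j m|) := by
          rw [← Real.norm_eq_abs]
          refine (norm_tsum_le_tsum_norm ?_).trans (Summable.tsum_le_tsum (fun j => ?_) ?_ ?_)
          · refine Summable.of_nonneg_of_le (fun j => norm_nonneg _) (fun j => ?_)
              ((hiteabs).mul_left |α m|)
            by_cases h : j = m
            · simp only [if_pos h, norm_zero]; positivity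
            · simp only [if_neg h, Real.norm_eq_abs]
              have := hFabs_le (j, m); rw [Real.norm_eq_abs] at this
              simpa [if_neg h] using this
          · by_cases h : j = m
            · simp [h]
            · simp only [if_neg h, Real.norm_eq_abs]
              have := hFabs_le (j, m); rw [Real.norm_eq_abs] at this
              simpa [if_neg h] using this
          · refine Summable.of_nonneg_of_le (fun j => norm_nonneg _) (fun j => ?_)
              ((hiteabs).mul_left |α m|)
            by_cases h : j = m
            · simp only [if_pos h, norm_zero]; positivity
            · simp only [if_neg h, Real.norm_eq_abs]
              have := hFabs_le (j, m); rw [Real.norm_eq_abs] at this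
              simpa [if_neg h] using this
          · exact (hiteabs).mul_left |α m|
        calc |∑' j, if j = m then 0 else F (j, m)|
            ≤ ∑' j, |α m| * (if j = m then 0 else |a j m|) := h1'
          _ = |α m| * ∑' j, (if j = m then 0 else |a j m|) :=
              Summable.tsum_mul_left _ hiteabs
          _ ≤ |α m| * (κ / 2) := mul_le_mul_of_nonneg_left hitesum (abs_nonneg _)
      have := neg_abs_le (∑' j, if j = m then 0 else F (j, m))
      nlinarith [hFmm, hRle, this, abs_nonneg (α m)]
    have hinner_sum : Summable (fun m => ∑' j, F (j, m)) := by
      refine Summable.of_norm_bounded (?_ : Summable fun m => ∑' j, |α m| * |a j m|) ?_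
      · have := (summable_prod_of_nonneg
          (f := fun q : ℕ × ℕ => |α q.1| * |a q.2 q.1|)
          (fun q => mul_nonneg (abs_nonneg _) (abs_nonneg _))).mp hG
        exact this.2
      · intro m
        refine (norm_tsum_le_tsum_norm ?_).trans (Summable.tsum_le_tsum (fun j => ?_) ?_ (hGrow m))
        · exact Summable.of_nonneg_of_le (fun j => norm_nonneg _)
            (fun j => hFabs_le (j, m)) (hGrow m)
        · exact hFabs_le (j, m)
        · exact Summable.of_nonneg_of_le (fun j => norm_nonneg _)
            (fun j => hFabs_le (j, m)) (hGrow m)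
    have hlow : (κ / 2 + cJtilde x) * (∑' m, |α m|) ≤ T := by
      rw [hswap]
      calc (κ / 2 + cJtilde x) * (∑' m, |α m|)
          = ∑' m, |α m| * (κ / 2 + cJtilde x) := by
            rw [← Summable.tsum_mul_left _ hα]
            exact tsum_congr fun m => mul_comm _ _
        _ ≤ ∑' m, ∑' j, F (j, m) :=
            Summable.tsum_le_tsum hinner (hα.mul_right _) hinner_sum
    exact hlow.trans hTle
  -- PART 2 : derive the contradiction
  have part1' : ∀ α : ℕ → ℝ, Summable (fun m => |α m|) →
      (κ / 2 + cJtilde x) * ∑' m, |α m| ≤ ‖∑' m, α m • x (p (n m))‖ := part1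
  refine ⟨part1', ?_⟩
  set g : ℕ → ℕ := fun m => p (n m) with hg_def
  have hg : StrictMono g := hp.comp hn
  -- the witness showing nonemptiness of the cm-sets, and the upper bound C
  have hwitness : ∀ (f : ℕ → ℕ) (m : ℕ),
      ‖x (f m)‖ ∈ {r : ℝ | ∃ α : ℕ → ℝ, (∀ n < m, α n = 0) ∧ Summable (fun n => |α n|) ∧
        (∑' n, |α n|) = 1 ∧ r = ‖∑' n, α n • (x ∘ f) n‖} := by
    intro f m
    refine ⟨fun k => if k = m then 1 else 0, fun k hk => if_neg (Nat.ne_of_lt hk), ?_, ?_, ?_⟩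
    · refine ⟨1, ?_⟩
      have : (fun k => |if k = m then (1:ℝ) else 0|) = fun k => if k = m then (1:ℝ) else 0 := by
        funext k; by_cases h : k = m <;> simp [h]
      rw [this]
      exact hasSum_ite_eq m 1
    · have : (fun k => |if k = m then (1:ℝ) else 0|) = fun k => if k = m then (1:ℝ) else 0 := by
        funext k; by_cases h : k = m <;> simp [h]
      rw [this]
      exact tsum_ite_eq m 1
    · have : (∑' k, (if k = m then (1:ℝ) else 0) • (x ∘ f) k) = (x ∘ f) m := by
        rw [tsum_eq_single m]
        · simp
        · intro k hk; simp [if_neg hk]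
      rw [this]; rfl
  have hbddbelow : ∀ (f : ℕ → ℕ) (m : ℕ),
      BddBelow {r : ℝ | ∃ α : ℕ → ℝ, (∀ n < m, α n = 0) ∧ Summable (fun n => |α n|) ∧
        (∑' n, |α n|) = 1 ∧ r = ‖∑' n, α n • (x ∘ f) n‖} := by
    intro f m
    exact ⟨0, fun r ⟨α, _, _, _, hr⟩ => hr ▸ norm_nonneg _⟩
  have hcm_le : ∀ (f : ℕ → ℕ) (m : ℕ), cm (x ∘ f) m ≤ C := by
    intro f m
    exact (csInf_le (hbddbelow f m) (hwitness f m)).trans (hC _)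
  have hcJ_le : ∀ f : ℕ → ℕ, cJ (x ∘ f) ≤ C :=
    fun f => Real.iSup_le (fun m => hcm_le f m) hC0
  have hcJt_le : cJtilde x ≤ C :=
    Real.iSup_le (fun f => hcJ_le f.1) hC0
  -- cm (x ∘ g) 0 ≥ κ/2 + cJtilde x
  have hcm0 : κ / 2 + cJtilde x ≤ cm (x ∘ g) 0 := by
    refine le_csInf ⟨_, hwitness g 0⟩ ?_
    rintro r ⟨α, -, hs, hone, rfl⟩
    have := part1 α hs
    rw [hone, mul_one] at this
    exact this
  have hcm_cJ : cm (x ∘ g) 0 ≤ cJ (x ∘ g) := by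
    refine le_ciSup ⟨C, ?_⟩ 0
    rintro r ⟨m, rfl⟩
    exact hcm_le g m
  have hcJ_cJt : cJ (x ∘ g) ≤ cJtilde x := by
    refine le_ciSup (f := fun f : {f : ℕ → ℕ // StrictMono f} => cJ (x ∘ f.1)) ⟨C, ?_⟩ ⟨g, hg⟩
    rintro r ⟨f, rfl⟩
    exact hcJ_le f.1
  linarith
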